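/- Transducer composition (finite counter). Let H₀, H₁, L be finite-dimensional complex inner product spaces, H := H₀ ⊕ H₁, and m ≥ 1 an integer. For 0 ≤ t ≤ m−1 let S_t be a unitary on H ⊕ L, and suppose given vectors ψ_{t,0} ∈ H₀ (0 ≤ t ≤ m, with ψ_{m,0} = 0), ψ_{t,1} ∈ H₁ (1 ≤ t ≤ m), and w_t ∈ L (0 ≤ t ≤ m−1) such that S_t(ψ_{t,0} ⊕ w_t) = (ψ_{t+1,0} + ψ_{t+1,1}) ⊕ w_t for every 0 ≤ t ≤ m−1. On ℂ^{m+1} ⊗ (H ⊕ L) (with orthonormal basis |0⟩,…,|m⟩ of ℂ^{m+1}) define the unitary S := V_c ∘ ( Σ_{t=0}^{m−1} |t⟩⟨t| ⊗ S_t + |m⟩⟨m| ⊗ I ), where V_c acts as |t⟩ ⊗ h ↦ |t+1 mod (m+1)⟩ ⊗ h for h ∈ H and as the identity on ℂ^{m+1} ⊗ L. Then S is unitary and S( |0⟩ ⊗ ψ_{0,0} + w ) = Σ_{t=1}^{m} |t⟩ ⊗ ψ_{t,1} + w, where w := |0⟩ ⊗ w₀ + Σ_{t=1}^{m−1} |t⟩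 ⊗ (ψ_{t,0} + w_t); moreover ‖w‖² = ‖w₀‖² + Σ_{t=1}^{m−1} ( ‖ψ_{t,0}‖² + ‖w_t‖² ). -/

import Mathlib

open scoped InnerProductSpace

open LinearMap

/-- The orthogonal projection onto a submodule, as an endomorphism of the ambient space. -/
noncomputable def projL {X : Type*} [NormedAddCommGroup X] [InnerProductSpace ℂ X]
    (K : Submodule ℂ X) [K.HasOrthogonalProjection] : X →ₗ[ℂ] X :=
  K.subtype ∘ₗ (K.orthogonalProjectionOnto).toLinearMap

/-- Transducer composition with a finite counter: composing `m` transducers `S_t` on the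
space `H ⊕ L` (with `H = H₀ ⊕ H₁`) with the counter-increment `V_c` yields a unitary `S`
on `ℂ^{m+1} ⊗ (H ⊕ L)` that transduces `|0⟩ ⊗ ψ_{0,0}` into `Σ_{t=1}^m |t⟩ ⊗ ψ_{t,1}`
with catalyst `w = |0⟩ ⊗ w₀ + Σ_{t=1}^{m−1} |t⟩ ⊗ (ψ_{t,0} + w_t)` of squared norm
`‖w₀‖² + Σ_{t=1}^{m−1} (‖ψ_{t,0}‖² + ‖w_t‖²)`. -/
theorem stmt12 {X : Type*} [NormedAddCommGroup X] [InnerProductSpace ℂ X]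
    [FiniteDimensional ℂ X]
    (m : ℕ) (hm : 0 < m)
    (H₀ H₁ L : Submodule ℂ X)
    (hH01 : ∀ a ∈ H₀, ∀ b ∈ H₁, ⟪a, b⟫_ℂ = 0)
    (hHL : ∀ a ∈ H₀ ⊔ H₁, ∀ l ∈ L, ⟪a, l⟫_ℂ = 0)
    (hfull : H₀ ⊔ H₁ ⊔ L = ⊤)
    (S : Fin m → (X ≃ₗᵢ[ℂ] X))
    (ψ₀ : Fin (m + 1) → X) (hψ₀ : ∀ t, ψ₀ t ∈ H₀) (hψ₀m : ψ₀ (Fin.last m) = 0)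
    (ψ₁ : Fin (m + 1) → X) (hψ₁ : ∀ t, ψ₁ t ∈ H₁)
    (wt : Fin m → X) (hwt : ∀ t, wt t ∈ L)
    (htrans : ∀ t : Fin m, S t (ψ₀ t.castSucc + wt t) = ψ₀ t.succ + ψ₁ t.succ + wt t)
    (Vc Sstep Sfull :
      PiLp 2 (fun _ : Fin (m + 1) => X) →ₗ[ℂ] PiLp 2 (fun _ : Fin (m + 1) => X))
    (hVc : ∀ g : PiLp 2 (fun _ : Fin (m + 1) => X), ∀ t : Fin (m + 1),
        Vc g t = projL (H₀ ⊔ H₁) (g (t - 1)) + projL L (g t))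
    (hSstep : ∀ g : PiLp 2 (fun _ : Fin (m + 1) => X), ∀ t : Fin (m + 1),
        Sstep g t = if h : (t : ℕ) < m then S ⟨t, h⟩ (g t) else g t)
    (hSfull : Sfull = Vc ∘ₗ Sstep)
    (wcat : PiLp 2 (fun _ : Fin (m + 1) => X))
    (hwcat : ∀ t : Fin (m + 1), wcat t =
        if h : (t : ℕ) < m then
          (if (t : ℕ) = 0 then wt ⟨t, h⟩ else ψ₀ t + wt ⟨t, h⟩) else 0)
    (input output : PiLp 2 (fun _ : Fin (m + 1) => X))
    (hinput : ∀ t : Fin (m + 1),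
        input t = (if (t : ℕ) = 0 then ψ₀ 0 else 0) + wcat t)
    (houtput : ∀ t : Fin (m + 1),
        output t = (if (t : ℕ) = 0 then 0 else ψ₁ t) + wcat t) :
    (∀ g, ‖Sfull g‖ = ‖g‖) ∧ Function.Bijective Sfull ∧
    Sfull input = output ∧
    ‖wcat‖ ^ 2 = ‖wt ⟨0, hm⟩‖ ^ 2 +
      ∑ t : Fin m, (if (t : ℕ) = 0 then 0 else ‖ψ₀ t.castSucc‖ ^ 2 + ‖wt t‖ ^ 2) := by
  classical
  -- `L` is the orthogonal complement of `H₀ ⊔ H₁`.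
  have hLle : L ≤ (H₀ ⊔ H₁)ᗮ := by
    intro l hl
    rw [Submodule.mem_orthogonal]
    intro a ha
    exact hHL a ha l hl
  have hL : L = (H₀ ⊔ H₁)ᗮ := by
    have h1 : (H₀ ⊔ H₁)ᗮ ⊓ (H₀ ⊔ H₁) ⊔ L = (H₀ ⊔ H₁)ᗮ ⊓ ((H₀ ⊔ H₁) ⊔ L) :=
      inf_sup_assoc_of_le _ hLle
    rw [hfull, inf_top_eq, inf_comm,
      disjoint_iff.1 (Submodule.orthogonal_disjoint (H₀ ⊔ H₁)), bot_sup_eq] at h1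
    exact h1
  subst hL
  set Hs := H₀ ⊔ H₁ with hHsdef
  have projL_eq : ∀ (K : Submodule ℂ X) (x : X), projL K x = (K.orthogonalProjectionOnto x : X) :=
    fun K x => rfl
  have hψHs : ∀ t, ψ₀ t ∈ Hs := fun t => Submodule.mem_sup_left (hψ₀ t)
  have hψ₁Hs : ∀ t, ψ₁ t ∈ Hs := fun t => Submodule.mem_sup_right (hψ₁ t)
  have pH : ∀ x ∈ Hs, projL Hs x = x := by
    intro x hx; rw [projL_eq]; exact Submodule.starProjection_eq_self_iff.2 hx
  have pH0 : ∀ x ∈ Hsᗮ, projL Hs x = 0 := by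
    intro x hx; rw [projL_eq,
      Submodule.orthogonalProjectionOnto_apply_of_mem_orthogonal hx]; rfl
  have pO : ∀ x ∈ Hsᗮ, projL Hsᗮ x = x := by
    intro x hx; rw [projL_eq]; exact Submodule.starProjection_eq_self_iff.2 hx
  have pO0 : ∀ x ∈ Hs, projL Hsᗮ x = 0 := by
    intro x hx; rw [projL_eq,
      Submodule.orthogonalProjectionOnto_orthogonal_apply_eq_zero hx]; rfl
  have decomp : ∀ x : X, projL Hs x + projL Hsᗮ x = x := by
    intro x; rw [projL_eq, projL_eq]
    exact Submodule.starProjection_add_starProjection_orthogonal (K := Hs) x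
  have memHs : ∀ x : X, projL Hs x ∈ Hs := fun x => (Hs.orthogonalProjectionOnto x).2
  have memO : ∀ x : X, projL Hsᗮ x ∈ Hsᗮ := fun x => (Hsᗮ.orthogonalProjectionOnto x).2
  have pyth : ∀ x y : X, x ∈ Hs → y ∈ Hsᗮ → ‖x + y‖ ^ 2 = ‖x‖ ^ 2 + ‖y‖ ^ 2 := by
    intro x y hx hy
    have h0 : ⟪x, y⟫_ℂ = 0 := (Submodule.mem_orthogonal Hs y).1 hy x hx
    have := norm_add_sq_eq_norm_sq_add_norm_sq_of_inner_eq_zero x y h0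
    rw [sq, sq, sq]; exact this
  -- norm preservation
  have normVc : ∀ h : PiLp 2 (fun _ : Fin (m + 1) => X), ‖Vc h‖ ^ 2 = ‖h‖ ^ 2 := by
    intro g
    rw [PiLp.norm_sq_eq_of_L2, PiLp.norm_sq_eq_of_L2]
    calc ∑ t, ‖Vc g t‖ ^ 2
        = ∑ t : Fin (m + 1), (‖projL Hs (g (t - 1))‖ ^ 2 + ‖projL Hsᗮ (g t)‖ ^ 2) := by
          refine Finset.sum_congr rfl fun t _ => ?_
          rw [hVc]; exact pyth _ _ (memHs _) (memO _)
      _ = ∑ t : Fin (m + 1), ‖projL Hs (g (t - 1))‖ ^ 2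
            + ∑ t : Fin (m + 1), ‖projL Hsᗮ (g t)‖ ^ 2 := Finset.sum_add_distrib
      _ = ∑ t : Fin (m + 1), ‖projL Hs (g t)‖ ^ 2
            + ∑ t : Fin (m + 1), ‖projL Hsᗮ (g t)‖ ^ 2 := by
          congr 1
          exact Fintype.sum_equiv (Equiv.subRight (1 : Fin (m + 1))) _ _ (fun t => rfl)
      _ = ∑ t, ‖g t‖ ^ 2 := by
          rw [← Finset.sum_add_distrib]
          refine Finset.sum_congr rfl fun t _ => ?_
          rw [← pyth _ _ (memHs _) (memO _), decomp]
  have normSstep : ∀ g : PiLp 2 (fun _ : Fin (m + 1) => X), ‖Sstep g‖ ^ 2 = ‖g‖ ^ 2 := by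
    intro g
    rw [PiLp.norm_sq_eq_of_L2, PiLp.norm_sq_eq_of_L2]
    refine Finset.sum_congr rfl fun t _ => ?_
    rw [hSstep]
    split
    · rw [LinearIsometryEquiv.norm_map]
    · rfl
  have normSq : ∀ g, ‖Sfull g‖ ^ 2 = ‖g‖ ^ 2 := by
    intro g
    rw [hSfull]
    show ‖Vc (Sstep g)‖ ^ 2 = ‖g‖ ^ 2
    rw [normVc, normSstep]
  have normEq : ∀ g, ‖Sfull g‖ = ‖g‖ := by
    intro g
    rw [← Real.sqrt_sq (norm_nonneg (Sfull g)), normSq g, Real.sqrt_sq (norm_nonneg g)]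
  have hinj : Function.Injective Sfull := by
    intro a b hab
    have h := normEq (a - b)
    rw [map_sub, hab, sub_self, norm_zero] at h
    exact sub_eq_zero.mp (norm_eq_zero.mp h.symm)
  have hbij : Function.Bijective Sfull :=
    ⟨hinj, (LinearMap.injective_iff_surjective).1 hinj⟩
  -- value of `Sstep input`
  have hsub : ∀ t : Fin (m + 1), ((t - 1 : Fin (m + 1)) : ℕ)
      = if (t : ℕ) = 0 then m else (t : ℕ) - 1 := by
    intro t
    have h1 : ((1 : Fin (m + 1)) : ℕ) = 1 := by
      rw [Fin.val_one']; exact Nat.mod_eq_of_lt (by omega)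
    rw [Fin.sub_def]
    dsimp only
    rw [h1]
    rcases Nat.eq_zero_or_pos (t : ℕ) with h | h
    · rw [if_pos h, h, Nat.add_zero]
      have h2 : m + 1 - 1 = m := by omega
      rw [h2]
      exact Nat.mod_eq_of_lt (by omega)
    · have h2 : m + 1 - 1 + (t : ℕ) = (m + 1) + ((t : ℕ) - 1) := by omega
      rw [h2, Nat.add_mod_left, Nat.mod_eq_of_lt (by omega), if_neg (by omega)]
  have hstep : ∀ t : Fin (m + 1), Sstep input t =
      if h : (t : ℕ) < m then
        ψ₀ (⟨(t : ℕ), h⟩ : Fin m).succ + ψ₁ (⟨(t : ℕ), h⟩ : Fin m).succ + wt ⟨(t : ℕ), h⟩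
      else 0 := by
    intro t
    rw [hSstep]
    by_cases h : (t : ℕ) < m
    · rw [dif_pos h, dif_pos h, hinput t, hwcat t, dif_pos h]
      have hcast : (⟨(t : ℕ), h⟩ : Fin m).castSucc = t := by
        apply Fin.ext; rfl
      by_cases h0 : (t : ℕ) = 0
      · rw [if_pos h0, if_pos h0]
        have ht0 : (0 : Fin (m + 1)) = (⟨(t : ℕ), h⟩ : Fin m).castSucc := by
          apply Fin.ext; simp [h0]
        rw [ht0, htrans]
      · rw [if_neg h0, if_neg h0, zero_add]
        have ht1 : ψ₀ t = ψ₀ ((⟨(t : ℕ), h⟩ : Fin m).castSucc) := by rw [hcast]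
        rw [ht1, htrans]
    · rw [dif_neg h, dif_neg h, hinput t, hwcat t, dif_neg h, if_neg (by omega), zero_add]
  have hmain : Sfull input = output := by
    refine PiLp.ext fun t => ?_
    rw [hSfull]
    show Vc (Sstep input) t = output t
    rw [hVc, houtput, hstep, hstep, hwcat]
    by_cases h0 : (t : ℕ) = 0
    · have hlt1 : ¬ ((t - 1 : Fin (m + 1)) : ℕ) < m := by
        rw [hsub, if_pos h0]; omega
      have hlt : (t : ℕ) < m := by omega
      rw [dif_neg hlt1, dif_pos hlt, dif_pos hlt, if_pos h0, if_pos h0, map_zero, zero_add,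
        zero_add, map_add, map_add, pO0 _ (hψHs _), pO0 _ (hψ₁Hs _), pO _ (hwt _),
        zero_add, zero_add]
    · have h1 : ((t - 1 : Fin (m + 1)) : ℕ) = (t : ℕ) - 1 := by
        rw [hsub, if_neg h0]
      have hlt1 : ((t - 1 : Fin (m + 1)) : ℕ) < m := by
        have := t.isLt; omega
      rw [dif_pos hlt1, if_neg h0]
      have hsucc : (⟨((t - 1 : Fin (m + 1)) : ℕ), hlt1⟩ : Fin m).succ = t := by
        apply Fin.ext
        rw [Fin.val_succ]
        simp only [h1]
        omega
      rw [map_add, map_add, pH _ (hψHs _), pH _ (hψ₁Hs _), pH0 _ (hwt _), add_zero, hsucc]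
      by_cases hlt : (t : ℕ) < m
      · rw [dif_pos hlt, dif_pos hlt, if_neg h0, map_add, map_add, pO0 _ (hψHs _),
          pO0 _ (hψ₁Hs _), pO _ (hwt _), zero_add, zero_add]
        abel
      · rw [dif_neg hlt, dif_neg hlt, map_zero, add_zero, add_zero]
        have htl : t = Fin.last m := by
          apply Fin.ext; rw [Fin.val_last]; have := t.isLt; omega
        rw [htl, hψ₀m, zero_add]
  refine ⟨normEq, hbij, hmain, ?_⟩
  -- norm of the catalyst
  rw [PiLp.norm_sq_eq_of_L2, Fin.sum_univ_castSucc]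
  have hlast : ‖wcat (Fin.last m)‖ ^ 2 = 0 := by
    rw [hwcat, dif_neg (by rw [Fin.val_last]; omega), norm_zero]
    norm_num
  rw [hlast, add_zero]
  have hterm : ∀ t : Fin m, ‖wcat t.castSucc‖ ^ 2 =
      (if (t : ℕ) = 0 then ‖wt t‖ ^ 2 else 0)
        + (if (t : ℕ) = 0 then 0 else ‖ψ₀ t.castSucc‖ ^ 2 + ‖wt t‖ ^ 2) := by
    intro t
    have hlt : ((t.castSucc : Fin (m + 1)) : ℕ) < m := t.isLt
    have heq : (⟨((t.castSucc : Fin (m + 1)) : ℕ), hlt⟩ : Fin m) = t := Fin.ext rfl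
    have hcoe : ((t.castSucc : Fin (m + 1)) : ℕ) = (t : ℕ) := rfl
    rw [hwcat, dif_pos hlt, heq, hcoe]
    by_cases h0 : (t : ℕ) = 0
    · rw [if_pos h0, if_pos h0, if_pos h0, add_zero]
    · rw [if_neg h0, if_neg h0, if_neg h0, zero_add, pyth _ _ (hψHs _) (hwt _)]
  rw [Finset.sum_congr rfl (fun t _ => hterm t), Finset.sum_add_distrib]
  congr 1
  rw [Finset.sum_eq_single_of_mem (⟨0, hm⟩ : Fin m) (Finset.mem_univ _)]
  · rw [if_pos rfl]
  · intro b _ hb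
    rw [if_neg]
    intro hb0
    exact hb (Fin.ext hb0)
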